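/- arXiv:1707.06250 — 3 statements merged into one kernel-verified Lean document; each statement's English description precedes it below -/
import Mathlib

section
/- Let p : [t₀,∞) → ℝ be a positive differentiable nonincreasing function and K ≥ 1 a real constant. Suppose there are functions E₁, E₃ with |E₁(t)| ≤ C·log(log t)/log t and |E₃(t)| ≤ C·log(log t)/(t·(log t)^(K+2)) such that p'(t) = -K·p(t)/(t·log t)·(1+E₁(t)) + E₃(t) for all t ≥ t₀. Then there exists a constant c₀ ≥ 0 such that p(t) = c₀·(log t)^(−K)·(1 + O(log(log t)/log t)) as t → ∞. -/
open Set Filter Real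

lemma mono_diff_helper (T : ℝ) (f g f' g' : ℝ → ℝ)
    (hf : ∀ t ∈ Set.Ici T, HasDerivAt f (f' t) t)
    (hg : ∀ t ∈ Set.Ici T, HasDerivAt g (g' t) t)
    (hb : ∀ t ∈ Set.Ici T, |f' t| ≤ g' t) :
    ∀ s t, T ≤ s → s ≤ t → |f t - f s| ≤ g t - g s := by
  have hmem : ∀ t ∈ interior (Set.Ici T), t ∈ Set.Ici T := fun t ht => interior_subset ht
  have h1 : MonotoneOn (fun t => g t - f t) (Set.Ici T) := by
    apply monotoneOn_of_hasDerivWithinAt_nonneg (convex_Ici T)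
      (f' := fun t => g' t - f' t)
    · intro t ht
      exact ((hg t ht).sub (hf t ht)).continuousAt.continuousWithinAt
    · intro t ht
      exact (((hg t (hmem t ht)).sub (hf t (hmem t ht))).hasDerivWithinAt)
    · intro t ht
      have := abs_le.1 (hb t (hmem t ht))
      linarith [this.2]
  have h2 : MonotoneOn (fun t => g t + f t) (Set.Ici T) := by
    apply monotoneOn_of_hasDerivWithinAt_nonneg (convex_Ici T)
      (f' := fun t => g' t + f' t)
    · intro t ht
      exact ((hg t ht).add (hf t ht)).continuousAt.continuousWithinAt
    · intro t ht
      exact (((hg t (hmem t ht)).add (hf t (hmem t ht))).hasDerivWithinAt)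
    · intro t ht
      have := abs_le.1 (hb t (hmem t ht))
      linarith [this.1]
  intro s t hs hst
  have hsI : s ∈ Set.Ici T := hs
  have htI : t ∈ Set.Ici T := le_trans hs hst
  have e1 := h1 hsI htI hst
  have e2 := h2 hsI htI hst
  simp only at e1 e2
  rw [abs_le]
  constructor <;> linarith

/-- Calculus step deducing the non-collision asymptotic from the effective rate
equation: if `p` is positive, differentiable, nonincreasing on `[t₀,∞)` and satisfies
`p'(t) = -K·p(t)/(t·log t)·(1+E₁(t)) + E₃(t)` with `|E₁(t)| ≤ C·log log t/log t` and
`|E₃(t)| ≤ C·log log t/(t·(log t)^(K+2))`, then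
`p(t) = c₀·(log t)^(-K)·(1 + O(log log t/log t))` for some `c₀ ≥ 0`. -/
theorem effective_rate_equation_asymptotic
    (t₀ C K : ℝ) (ht₀ : 2 ≤ t₀) (hC : 0 < C) (hK : 1 ≤ K)
    (p E₁ E₃ : ℝ → ℝ)
    (hpos : ∀ t, t₀ ≤ t → 0 < p t)
    (hmono : ∀ s t, t₀ ≤ s → s ≤ t → p t ≤ p s)
    (hE₁ : ∀ t, t₀ ≤ t → |E₁ t| ≤ C * Real.log (Real.log t) / Real.log t)
    (hE₃ : ∀ t, t₀ ≤ t →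
      |E₃ t| ≤ C * Real.log (Real.log t) / (t * Real.log t ^ (K + 2)))
    (hode : ∀ t, t₀ ≤ t →
      HasDerivAt p (-(K * p t / (t * Real.log t)) * (1 + E₁ t) + E₃ t) t) :
    ∃ c₀ : ℝ, 0 ≤ c₀ ∧ ∃ C' T : ℝ, 0 < C' ∧ ∀ t, T ≤ t →
      |p t - c₀ * Real.log t ^ (-K)| ≤
        C' * (Real.log (Real.log t) / Real.log t) * Real.log t ^ (-K) := by
  set T₁ : ℝ := max t₀ 16 with hT₁def
  have hTt₀ : t₀ ≤ T₁ := le_max_left _ _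
  have hT16 : (16 : ℝ) ≤ T₁ := le_max_right _ _
  -- basic facts on [T₁, ∞)
  have hlog16 : Real.exp 1 ≤ Real.log 16 := by
    rw [show (16 : ℝ) = 2 ^ 4 by norm_num, Real.log_pow]
    push_cast
    nlinarith [Real.log_two_gt_d9, Real.exp_one_lt_d9]
  have hbasic : ∀ t ∈ Set.Ici T₁, t₀ ≤ t ∧ 0 < t ∧ Real.exp 1 ≤ Real.log t ∧
      1 < Real.log t ∧ 1 ≤ Real.log (Real.log t) := by
    intro t ht
    have ht16 : (16 : ℝ) ≤ t := le_trans hT16 ht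
    have htpos : (0 : ℝ) < t := by linarith
    have hBe : Real.exp 1 ≤ Real.log t :=
      le_trans hlog16 (Real.log_le_log (by norm_num) ht16)
    have hB1 : 1 < Real.log t := lt_of_lt_of_le (by
      have := Real.add_one_le_exp (1 : ℝ); linarith) hBe
    have hA1 : 1 ≤ Real.log (Real.log t) := by
      have := Real.log_le_log (Real.exp_pos 1) hBe
      rwa [Real.log_exp] at this
    exact ⟨le_trans hTt₀ ht, htpos, hBe, hB1, hA1⟩
  -- names
  set q : ℝ → ℝ := fun t => p t * Real.log t ^ K with hqdef
  set Dq : ℝ → ℝ := fun t =>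
    -(K * p t * Real.log t ^ (K - 1) / t) * E₁ t + E₃ t * Real.log t ^ K with hDqdef
  set F : ℝ → ℝ := fun t => -((Real.log (Real.log t) + 1) / Real.log t) with hFdef
  set F' : ℝ → ℝ := fun t =>
    Real.log (Real.log t) / (t * Real.log t * Real.log t) with hF'def
  set r : ℝ → ℝ := fun t => Real.log (K * q t + 1) with hrdef
  set Dr : ℝ → ℝ := fun t => K * Dq t / (K * q t + 1) with hDrdef
  have hqpos : ∀ t ∈ Set.Ici T₁, 0 < q t := by
    intro t ht
    obtain ⟨ht₀', htpos, hBe, hB1, hA1⟩ := hbasic t ht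
    have : (0:ℝ) < Real.log t ^ K := Real.rpow_pos_of_pos (by linarith) K
    exact mul_pos (hpos t ht₀') this
  have hKq : ∀ t ∈ Set.Ici T₁, 0 < K * q t + 1 := by
    intro t ht
    have := hqpos t ht
    nlinarith
  have hF'nonneg : ∀ t ∈ Set.Ici T₁, 0 ≤ F' t := by
    intro t ht
    obtain ⟨ht₀', htpos, hBe, hB1, hA1⟩ := hbasic t ht
    have : (0:ℝ) < t * Real.log t * Real.log t := by positivity
    exact div_nonneg (by linarith) this.le
  have hFneg : ∀ t ∈ Set.Ici T₁, F t ≤ 0 := by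
    intro t ht
    obtain ⟨ht₀', htpos, hBe, hB1, hA1⟩ := hbasic t ht
    have : 0 ≤ (Real.log (Real.log t) + 1) / Real.log t :=
      div_nonneg (by linarith) (by linarith)
    simp only [hFdef]
    linarith
  -- derivative of q
  have hq : ∀ t ∈ Set.Ici T₁, HasDerivAt q (Dq t) t := by
    intro t ht
    obtain ⟨ht₀', htpos, hBe, hB1, hA1⟩ := hbasic t ht
    have htne : t ≠ 0 := ne_of_gt htpos
    have hBpos : 0 < Real.log t := by linarith
    have hBne : Real.log t ≠ 0 := ne_of_gt hBpos
    have hrp : HasDerivAt (fun s => Real.log s ^ K)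
        (K * Real.log t ^ (K - 1) * t⁻¹) t := by
      have h1 := (Real.hasDerivAt_rpow_const (x := Real.log t) (p := K)
        (Or.inl hBne)).comp t (Real.hasDerivAt_log htne)
      exact h1
    have hmul := (hode t ht₀').mul hrp
    have heq : (-(K * p t / (t * Real.log t)) * (1 + E₁ t) + E₃ t) * Real.log t ^ K
        + p t * (K * Real.log t ^ (K - 1) * t⁻¹) = Dq t := by
      have hpow1 : Real.log t ^ K = Real.log t ^ (K - 1) * Real.log t := by
        nth_rewrite 1 [show K = (K - 1) + 1 by ring]
        exact Real.rpow_add_one hBne _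
      simp only [hDqdef]
      rw [hpow1]
      field_simp
      ring
    rw [heq] at hmul
    exact hmul
  -- bound on Dq
  have hqb : ∀ t ∈ Set.Ici T₁, |Dq t| ≤ C * F' t * (K * q t + 1) := by
    intro t ht
    obtain ⟨ht₀', htpos, hBe, hB1, hA1⟩ := hbasic t ht
    have htne : t ≠ 0 := ne_of_gt htpos
    have hBpos : 0 < Real.log t := by linarith
    have hBne : Real.log t ≠ 0 := ne_of_gt hBpos
    have hApos : 0 < Real.log (Real.log t) := by linarith
    have hppos := hpos t ht₀'
    have ha : 0 ≤ K * p t * Real.log t ^ (K - 1) / t := by positivity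
    have hBKpos : (0:ℝ) < Real.log t ^ K := Real.rpow_pos_of_pos hBpos K
    have h1 : |(-(K * p t * Real.log t ^ (K - 1) / t)) * E₁ t| ≤
        (K * p t * Real.log t ^ (K - 1) / t) * (C * Real.log (Real.log t) / Real.log t) := by
      rw [abs_mul, abs_neg, abs_of_nonneg ha]
      exact mul_le_mul_of_nonneg_left (hE₁ t ht₀') ha
    have h2 : |E₃ t * Real.log t ^ K| ≤
        (C * Real.log (Real.log t) / (t * Real.log t ^ (K + 2))) * Real.log t ^ K := by
      rw [abs_mul, abs_of_nonneg hBKpos.le]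
      exact mul_le_mul_of_nonneg_right (hE₃ t ht₀') hBKpos.le
    have hpow1 : Real.log t ^ K = Real.log t ^ (K - 1) * Real.log t := by
      nth_rewrite 1 [show K = (K - 1) + 1 by ring]
      exact Real.rpow_add_one hBne _
    have hpow2 : Real.log t ^ (K + 2) = Real.log t ^ K * Real.log t * Real.log t := by
      rw [show K + 2 = (K + 1) + 1 by ring, Real.rpow_add_one hBne,
        Real.rpow_add_one hBne]
    have heq : (K * p t * Real.log t ^ (K - 1) / t) *
          (C * Real.log (Real.log t) / Real.log t)
        + (C * Real.log (Real.log t) / (t * Real.log t ^ (K + 2))) * Real.log t ^ K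
        = C * F' t * (K * q t + 1) := by
      simp only [hF'def, hqdef]
      rw [hpow2, hpow1]
      have hBK1 : Real.log t ^ (K-1) ≠ 0 := ne_of_gt (Real.rpow_pos_of_pos hBpos _)
      field_simp
    calc |Dq t| ≤ |(-(K * p t * Real.log t ^ (K - 1) / t)) * E₁ t|
          + |E₃ t * Real.log t ^ K| := abs_add_le _ _
      _ ≤ (K * p t * Real.log t ^ (K - 1) / t) *
            (C * Real.log (Real.log t) / Real.log t)
          + (C * Real.log (Real.log t) / (t * Real.log t ^ (K + 2))) *
            Real.log t ^ K := add_le_add h1 h2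
      _ = C * F' t * (K * q t + 1) := heq
  -- derivative of r
  have hr : ∀ t ∈ Set.Ici T₁, HasDerivAt r (Dr t) t := by
    intro t ht
    have hin : HasDerivAt (fun s => K * q s + 1) (K * Dq t) t :=
      ((hq t ht).const_mul K).add_const 1
    exact hin.log (ne_of_gt (hKq t ht))
  have hrb : ∀ t ∈ Set.Ici T₁, |Dr t| ≤ K * C * F' t := by
    intro t ht
    have hKq1 := hKq t ht
    have hF'n := hF'nonneg t ht
    have hDq := hqb t ht
    have hKpos : (0:ℝ) < K := by linarith
    simp only [hDrdef]
    rw [abs_div, abs_mul, abs_of_pos hKpos, abs_of_pos hKq1, div_le_iff₀ hKq1]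
    nlinarith [abs_nonneg (Dq t)]
  -- derivative of F
  have hF : ∀ t ∈ Set.Ici T₁, HasDerivAt F (F' t) t := by
    intro t ht
    obtain ⟨ht₀', htpos, hBe, hB1, hA1⟩ := hbasic t ht
    have htne : t ≠ 0 := ne_of_gt htpos
    have hBpos : 0 < Real.log t := by linarith
    have hBne : Real.log t ≠ 0 := ne_of_gt hBpos
    have hAder : HasDerivAt (fun s => Real.log (Real.log s))
        ((Real.log t)⁻¹ * t⁻¹) t := by
      have := (Real.hasDerivAt_log hBne).comp t (Real.hasDerivAt_log htne)
      exact this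
    have hnum : HasDerivAt (fun s => Real.log (Real.log s) + 1)
        ((Real.log t)⁻¹ * t⁻¹) t := hAder.add_const 1
    have hdiv := (hnum.div (Real.hasDerivAt_log htne) hBne).neg
    have h5 : (Real.log t)⁻¹ * t⁻¹ * Real.log t = t⁻¹ := by
      field_simp
    have heq : -(((Real.log t)⁻¹ * t⁻¹ * Real.log t
        - (Real.log (Real.log t) + 1) * t⁻¹) / Real.log t ^ 2) = F' t := by
      rw [h5]
      simp only [hF'def]
      rw [show t⁻¹ - (Real.log (Real.log t) + 1) * t⁻¹
          = -(Real.log (Real.log t) * t⁻¹) by ring, neg_div, neg_neg, sq]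
      rw [div_eq_div_iff (by positivity) (by positivity)]
      field_simp
    rw [heq] at hdiv
    exact hdiv
  -- r has bounded oscillation
  have hrdiff := mono_diff_helper T₁ r (fun t => K * C * F t) Dr
    (fun t => K * C * F' t) hr
    (fun t ht => (hF t ht).const_mul (K * C)) hrb
  set M : ℝ := Real.exp (r T₁ + K * C * (0 - F T₁)) with hMdef
  have hMpos : 0 < M := Real.exp_pos _
  have hT₁mem : T₁ ∈ Set.Ici T₁ := Set.self_mem_Ici
  have hKC : 0 ≤ K * C := by positivity
  have hqM : ∀ t ∈ Set.Ici T₁, K * q t + 1 ≤ M := by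
    intro t ht
    have h1 := (abs_le.1 (hrdiff T₁ t (le_refl _) ht)).2
    have hFt := hFneg t ht
    have h2 : K * C * F t ≤ 0 := mul_nonpos_of_nonneg_of_nonpos hKC hFt
    have h3 : r t ≤ r T₁ + K * C * (0 - F T₁) := by linarith
    calc K * q t + 1 = Real.exp (r t) := (Real.exp_log (hKq t ht)).symm
      _ ≤ M := Real.exp_le_exp.2 h3
  have hM1 : 1 ≤ M := by
    have := hKq T₁ hT₁mem
    have := hqM T₁ hT₁mem
    have := hqpos T₁ hT₁mem
    nlinarith
  -- q has controlled oscillation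
  have hqb2 : ∀ t ∈ Set.Ici T₁, |Dq t| ≤ C * M * F' t := by
    intro t ht
    have h1 := hqb t ht
    have h2 := hqM t ht
    have h3 := hF'nonneg t ht
    have h4 : 0 ≤ C * F' t := by positivity
    nlinarith [mul_nonneg h4 (sub_nonneg.2 h2)]
  have hqdiff := mono_diff_helper T₁ q (fun t => C * M * F t) Dq
    (fun t => C * M * F' t) hq
    (fun t ht => (hF t ht).const_mul (C * M)) hqb2
  have hCM : 0 ≤ C * M := by positivity
  -- the limit constant
  set φ : ℝ → ℝ := fun t => q t + C * M * F t with hφdef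
  have hφmono : ∀ s t, T₁ ≤ s → s ≤ t → φ s ≤ φ t := by
    intro s t hs hst
    have h1 := (abs_le.1 (hqdiff s t hs hst)).1
    simp only [hφdef]
    linarith
  have hφle : ∀ t ∈ Set.Ici T₁, φ t ≤ M := by
    intro t ht
    have h1 := hqM t ht
    have h2 := hqpos t ht
    have h3 : C * M * F t ≤ 0 := mul_nonpos_of_nonneg_of_nonpos hCM (hFneg t ht)
    have h4 : q t ≤ K * q t := le_mul_of_one_le_left h2.le hK
    simp only [hφdef]
    linarith
  have hSne : (φ '' Set.Ici T₁).Nonempty := ⟨φ T₁, ⟨T₁, hT₁mem, rfl⟩⟩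
  have hSbdd : BddAbove (φ '' Set.Ici T₁) := by
    refine ⟨M, ?_⟩
    rintro x ⟨u, hu, rfl⟩
    exact hφle u hu
  set c₀ : ℝ := sSup (φ '' Set.Ici T₁) with hc₀def
  have hle : ∀ t ∈ Set.Ici T₁, φ t ≤ c₀ := by
    intro t ht
    exact le_csSup hSbdd ⟨t, ht, rfl⟩
  have hge : ∀ t ∈ Set.Ici T₁, c₀ ≤ φ t - 2 * (C * M * F t) := by
    intro t ht
    apply csSup_le hSne
    rintro x ⟨u, hu, rfl⟩
    have hFu : C * M * F u ≤ 0 := mul_nonpos_of_nonneg_of_nonpos hCM (hFneg u hu)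
    have hFt : C * M * F t ≤ 0 := mul_nonpos_of_nonneg_of_nonpos hCM (hFneg t ht)
    rcases le_total u t with h | h
    · have := hφmono u t hu h
      linarith
    · have h1 := (abs_le.1 (hqdiff t u ht h)).2
      simp only [hφdef] at hFu hFt ⊢
      linarith
  have habs : ∀ t ∈ Set.Ici T₁, |q t - c₀| ≤ C * M * (0 - F t) := by
    intro t ht
    have h1 := hle t ht
    have h2 := hge t ht
    simp only [hφdef] at h1 h2
    rw [abs_le]
    constructor
    · linarith
    · linarith
  -- c₀ ≥ 0
  have hFtend : Tendsto F atTop (nhds 0) := by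
    have h1 : Tendsto (fun x : ℝ => Real.log x / x) atTop (nhds 0) := by
      simpa using Real.isLittleO_log_id_atTop.tendsto_div_nhds_zero
    have h2 : Tendsto (fun t : ℝ => Real.log (Real.log t) / Real.log t)
        atTop (nhds 0) := h1.comp Real.tendsto_log_atTop
    have h3 : Tendsto (fun t : ℝ => (Real.log t)⁻¹) atTop (nhds 0) :=
      tendsto_inv_atTop_zero.comp Real.tendsto_log_atTop
    have h4 := (h2.add h3).neg
    simp only [neg_zero, add_zero] at h4
    have heqF : F = fun t => -(Real.log (Real.log t) / Real.log t + (Real.log t)⁻¹) := by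
      funext t
      simp only [hFdef]
      rw [add_div, one_div]
    rw [heqF]
    exact h4
  have hc₀nonneg : 0 ≤ c₀ := by
    have htend : Tendsto (fun t => C * M * F t) atTop (nhds 0) := by
      have h := hFtend.const_mul (C * M)
      rw [mul_zero] at h
      exact h
    apply le_of_tendsto htend
    filter_upwards [eventually_ge_atTop T₁] with t ht
    have h1 := hle t ht
    have h2 := hqpos t ht
    simp only [hφdef] at h1
    linarith
  -- conclusion
  refine ⟨c₀, hc₀nonneg, 2 * C * M, T₁, by positivity, ?_⟩
  intro t ht
  obtain ⟨ht₀', htpos, hBe, hB1, hA1⟩ := hbasic t ht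
  have hBpos : 0 < Real.log t := by linarith
  have hpq : p t = q t * Real.log t ^ (-K) := by
    simp only [hqdef]
    rw [mul_assoc, ← Real.rpow_add hBpos]
    simp
  have hnK : (0:ℝ) ≤ Real.log t ^ (-K) := (Real.rpow_pos_of_pos hBpos _).le
  have habs' := habs t ht
  have hFval : 0 - F t = (Real.log (Real.log t) + 1) / Real.log t := by
    simp only [hFdef]; ring
  have hFb : 0 - F t ≤ 2 * (Real.log (Real.log t) / Real.log t) := by
    rw [hFval]
    rw [div_le_iff₀ hBpos] at *
    have : 2 * (Real.log (Real.log t) / Real.log t) * Real.log t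
        = 2 * Real.log (Real.log t) := by field_simp
    rw [this]
    linarith
  have hq_c : |q t - c₀| ≤ 2 * C * M * (Real.log (Real.log t) / Real.log t) := by
    calc |q t - c₀| ≤ C * M * (0 - F t) := habs'
      _ ≤ C * M * (2 * (Real.log (Real.log t) / Real.log t)) :=
          mul_le_mul_of_nonneg_left hFb hCM
      _ = 2 * C * M * (Real.log (Real.log t) / Real.log t) := by ring
  calc |p t - c₀ * Real.log t ^ (-K)|
      = |(q t - c₀) * Real.log t ^ (-K)| := by rw [hpq, sub_mul]
    _ = |q t - c₀| * Real.log t ^ (-K) := by rw [abs_mul, abs_of_nonneg hnK]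
    _ ≤ 2 * C * M * (Real.log (Real.log t) / Real.log t) * Real.log t ^ (-K) :=
          mul_le_mul_of_nonneg_right hq_c hnK
end

section
/- Suppose p : [t₀,∞) → ℝ is differentiable with |p'(r)| ≤ C/(r·(log r)^(K+1)) for all r ≥ t₀, where K ≥ 1. Then for s = t·(log t)^(−α) with α > 0 and t large enough that s ≥ t₀, one has |p(s) − p(t)| ≤ C·((log s)^(−K) − (log t)^(−K))/K, and consequently |p(s) − p(t)| = O(log(log t)/(log t)^(K+1)) as t → ∞. -/
open Real Filter Set

private lemma key_bound
    (t₀ C K : ℝ) (ht₀ : 3 ≤ t₀) (hC : 0 < C) (hK : 1 ≤ K)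
    (p : ℝ → ℝ)
    (hdiff : ∀ r, t₀ ≤ r → DifferentiableAt ℝ p r)
    (hd : ∀ r, t₀ ≤ r → |deriv p r| ≤ C / (r * Real.log r ^ (K + 1)))
    (a b : ℝ) (ha : t₀ ≤ a) (hab : a ≤ b) :
    |p a - p b| ≤ C * (Real.log a ^ (-K) - Real.log b ^ (-K)) / K := by
  have hK0 : 0 < K := lt_of_lt_of_le one_pos hK
  have hmem : ∀ x ∈ Icc a b, t₀ ≤ x := fun x hx => ha.trans hx.1
  have hlog : ∀ x : ℝ, t₀ ≤ x → 1 < Real.log x := by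
    intro x hx
    have h3x : (3:ℝ) ≤ x := ht₀.trans hx
    have : Real.exp 1 < x := by
      have := Real.exp_one_lt_d9
      nlinarith
    calc 1 = Real.log (Real.exp 1) := (Real.log_exp 1).symm
    _ < Real.log x := Real.log_lt_log (Real.exp_pos 1) this
  set B : ℝ → ℝ := fun x => C / K * (Real.log a ^ (-K) - Real.log x ^ (-K)) with hBdef
  set B' : ℝ → ℝ := fun x => C / (x * Real.log x ^ (K + 1)) with hB'def
  have hB : ∀ x : ℝ, t₀ ≤ x → HasDerivAt B (B' x) x := by
    intro x hx
    have hx0 : 0 < x := by linarith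
    have hlx : 1 < Real.log x := hlog x hx
    have hlx0 : 0 < Real.log x := by linarith
    have h1 : HasDerivAt (fun x => Real.log x ^ (-K)) (x⁻¹ * (-K) * Real.log x ^ (-K - 1)) x :=
      (Real.hasDerivAt_log (ne_of_gt hx0)).rpow_const (Or.inl (ne_of_gt hlx0))
    have h2 := ((hasDerivAt_const x (Real.log a ^ (-K))).sub h1).const_mul (C / K)
    convert h2 using 1
    case e'_4 => rfl
    case e'_5 => rfl
    case e'_8 => rfl
    have hpow : Real.log x ^ (-K - 1) = (Real.log x ^ (K + 1))⁻¹ := by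
      rw [show -K - 1 = -(K + 1) by ring, Real.rpow_neg hlx0.le]
    simp only [hB'def, hpow]
    field_simp
    ring
  have key := image_norm_le_of_norm_deriv_right_le_deriv_boundary'
    (f := fun x => p x - p a) (f' := deriv p) (a := a) (b := b)
    (B := B) (B' := B')
    (fun x hx => ((hdiff x (hmem x hx)).continuousAt.continuousWithinAt).sub
      continuousWithinAt_const)
    (fun x hx => (((hdiff x (hmem x (Ico_subset_Icc_self hx))).hasDerivAt).sub_const
      (p a)).hasDerivWithinAt)
    (by simp [hBdef])
    (fun x hx => (hB x (hmem x hx)).continuousAt.continuousWithinAt)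
    (fun x hx => (hB x (hmem x (Ico_subset_Icc_self hx))).hasDerivWithinAt)
    (fun x hx => by
      rw [Real.norm_eq_abs]
      exact hd x (hmem x (Ico_subset_Icc_self hx)))
    (right_mem_Icc.2 hab)
  rw [Real.norm_eq_abs] at key
  rw [abs_sub_comm]
  calc |p b - p a| ≤ C / K * (Real.log a ^ (-K) - Real.log b ^ (-K)) := key
  _ = C * (Real.log a ^ (-K) - Real.log b ^ (-K)) / K := by ring

private lemma rpow_neg_diff_le (K u v : ℝ) (hK : 0 < K) (hu : 0 < u) (huv : u ≤ v) :
    u ^ (-K) - v ^ (-K) ≤ K * u ^ (-K - 1) * (v - u) := by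
  have h := norm_image_sub_le_of_norm_deriv_le_segment'
    (f := fun x : ℝ => x ^ (-K)) (f' := fun x => (-K) * x ^ (-K - 1))
    (a := u) (b := v) (C := K * u ^ (-K - 1))
    (fun x hx => (Real.hasDerivAt_rpow_const
      (Or.inl (ne_of_gt (hu.trans_le hx.1)))).hasDerivWithinAt)
    (fun x hx => by
      rw [Real.norm_eq_abs, abs_mul, abs_neg, abs_of_pos hK,
        abs_of_pos (Real.rpow_pos_of_pos (hu.trans_le hx.1) _)]
      have : x ^ (-K - 1) ≤ u ^ (-K - 1) :=
        Real.rpow_le_rpow_of_nonpos hu hx.1 (by linarith)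
      nlinarith)
    v (right_mem_Icc.2 huv)
  rw [Real.norm_eq_abs] at h
  have := (abs_le.1 h).1
  linarith

/-- If `|p'(r)| ≤ C/(r·(log r)^(K+1))` for `r ≥ t₀`, then with `s = t·(log t)^(-α)`
one has `|p(s) - p(t)| ≤ C·((log s)^(-K) - (log t)^(-K))/K`, and consequently
`|p(s) - p(t)| = O(log log t/(log t)^(K+1))` as `t → ∞`. -/
theorem replace_intermediate_time
    (t₀ C K α : ℝ) (ht₀ : 3 ≤ t₀) (hC : 0 < C) (hK : 1 ≤ K) (hα : 0 < α)
    (p : ℝ → ℝ)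
    (hdiff : ∀ r, t₀ ≤ r → DifferentiableAt ℝ p r)
    (hd : ∀ r, t₀ ≤ r → |deriv p r| ≤ C / (r * Real.log r ^ (K + 1))) :
    (∀ t, t₀ ≤ t * Real.log t ^ (-α) → t * Real.log t ^ (-α) ≤ t →
      |p (t * Real.log t ^ (-α)) - p t| ≤
        C * (Real.log (t * Real.log t ^ (-α)) ^ (-K) - Real.log t ^ (-K)) / K)
    ∧ ∃ C' T : ℝ, 0 < C' ∧ ∀ t, T ≤ t →
        |p (t * Real.log t ^ (-α)) - p t| ≤
          C' * Real.log (Real.log t) / Real.log t ^ (K + 1) := by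
  have hK0 : 0 < K := lt_of_lt_of_le one_pos hK
  have part1 : ∀ t, t₀ ≤ t * Real.log t ^ (-α) → t * Real.log t ^ (-α) ≤ t →
      |p (t * Real.log t ^ (-α)) - p t| ≤
        C * (Real.log (t * Real.log t ^ (-α)) ^ (-K) - Real.log t ^ (-K)) / K :=
    fun t hs hst => key_bound t₀ C K ht₀ hC hK p hdiff hd _ t hs hst
  refine ⟨part1, C * α * 2 ^ (K + 1), ?_⟩
  -- eventual statements
  have E0 : ∀ᶠ t : ℝ in atTop, 3 ≤ Real.log t :=
    Real.tendsto_log_atTop.eventually_ge_atTop 3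
  have E1 : ∀ᶠ t : ℝ in atTop, t₀ ≤ t * Real.log t ^ (-α) := by
    have hoo := (isLittleO_log_rpow_rpow_atTop (s := 1/2) α (by norm_num)).bound one_pos
    have h2 := (tendsto_rpow_atTop (by norm_num : (0:ℝ) < 1/2)).eventually_ge_atTop t₀
    filter_upwards [hoo, h2, E0, eventually_ge_atTop 1] with t hlt hrt h3 ht1
    have ht0 : (0:ℝ) < t := lt_of_lt_of_le one_pos ht1
    have hv0 : 0 < Real.log t := by linarith
    have hla : Real.log t ^ α ≤ t ^ ((1:ℝ)/2) := by
      rw [Real.norm_eq_abs, Real.norm_eq_abs, one_mul,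
        abs_of_nonneg (Real.rpow_nonneg hv0.le _),
        abs_of_nonneg (Real.rpow_nonneg ht0.le _)] at hlt
      exact hlt
    have hhalf : 0 < t ^ ((1:ℝ)/2) := Real.rpow_pos_of_pos ht0 _
    have hla0 : 0 < Real.log t ^ α := Real.rpow_pos_of_pos hv0 _
    have : t * Real.log t ^ (-α) = t / Real.log t ^ α := by
      rw [Real.rpow_neg hv0.le]; ring
    rw [this]
    calc t₀ ≤ t ^ ((1:ℝ)/2) := hrt
    _ = t / t ^ ((1:ℝ)/2) := by
        rw [eq_div_iff (ne_of_gt hhalf), ← Real.rpow_add ht0]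
        norm_num
    _ ≤ t / Real.log t ^ α := by gcongr
  have E2 : ∀ᶠ t : ℝ in atTop, α * Real.log (Real.log t) ≤ Real.log t / 2 := by
    have h := (Real.isLittleO_log_id_atTop.comp_tendsto Real.tendsto_log_atTop).bound
      (show (0:ℝ) < 1 / (2 * α) by positivity)
    filter_upwards [h, E0] with t hlt h3
    simp only [Function.comp, id] at hlt
    rw [Real.norm_eq_abs, Real.norm_eq_abs, abs_of_nonneg (by linarith : (0:ℝ) ≤ Real.log t)]
      at hlt
    have := le_abs_self (Real.log (Real.log t))
    have h' : Real.log (Real.log t) ≤ 1 / (2 * α) * Real.log t := le_trans this hlt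
    calc α * Real.log (Real.log t) ≤ α * (1 / (2 * α) * Real.log t) := by nlinarith
    _ = Real.log t / 2 := by field_simp
  have hev : ∀ᶠ t : ℝ in atTop,
      |p (t * Real.log t ^ (-α)) - p t| ≤
        C * α * 2 ^ (K + 1) * Real.log (Real.log t) / Real.log t ^ (K + 1) := by
    filter_upwards [E0, E1, E2, eventually_ge_atTop 1] with t h3 h1' h2' ht1
    have ht0 : (0:ℝ) < t := lt_of_lt_of_le one_pos ht1
    set v := Real.log t with hv
    have hv0 : 0 < v := by linarith
    have hLL : 0 ≤ Real.log v := Real.log_nonneg (by linarith)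
    have hrpos : 0 < v ^ (-α) := Real.rpow_pos_of_pos hv0 _
    have hs0 : 0 < t * v ^ (-α) := mul_pos ht0 hrpos
    have hs_le_t : t * v ^ (-α) ≤ t := by
      have : v ^ (-α) ≤ 1 := Real.rpow_le_one_of_one_le_of_nonpos (by linarith) (by linarith)
      nlinarith
    have hlogs : Real.log (t * v ^ (-α)) = v - α * Real.log v := by
      rw [Real.log_mul (ne_of_gt ht0) (ne_of_gt hrpos), Real.log_rpow hv0]; ring
    have hu : v / 2 ≤ Real.log (t * v ^ (-α)) := by rw [hlogs]; linarith
    have hu0 : 0 < Real.log (t * v ^ (-α)) := lt_of_lt_of_le (by linarith) hu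
    have husv : Real.log (t * v ^ (-α)) ≤ v := by rw [hlogs]; nlinarith
    have hp1 := part1 t h1' hs_le_t
    have hdle := rpow_neg_diff_le K (Real.log (t * v ^ (-α))) v hK0 hu0 husv
    have hvu : v - Real.log (t * v ^ (-α)) = α * Real.log v := by rw [hlogs]; ring
    rw [hvu] at hdle
    have hmono : Real.log (t * v ^ (-α)) ^ (-K - 1) ≤ (v / 2) ^ (-K - 1) :=
      Real.rpow_le_rpow_of_nonpos (by linarith) hu (by linarith)
    have h2pow : (v / 2) ^ (-K - 1) = 2 ^ (K + 1) / v ^ (K + 1) := by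
      rw [show -K - 1 = -(K + 1) by ring, Real.rpow_neg (by linarith : (0:ℝ) ≤ v / 2),
        Real.div_rpow hv0.le (by norm_num : (0:ℝ) ≤ 2), inv_div]
    calc |p (t * v ^ (-α)) - p t|
        ≤ C * (Real.log (t * v ^ (-α)) ^ (-K) - v ^ (-K)) / K := hp1
    _ ≤ C * (K * Real.log (t * v ^ (-α)) ^ (-K - 1) * (α * Real.log v)) / K := by gcongr
    _ = C * α * Real.log (t * v ^ (-α)) ^ (-K - 1) * Real.log v := by field_simp
    _ ≤ C * α * (v / 2) ^ (-K - 1) * Real.log v := by gcongr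
    _ = C * α * 2 ^ (K + 1) * Real.log v / v ^ (K + 1) := by rw [h2pow]; ring
  obtain ⟨T, hT⟩ := eventually_atTop.mp hev
  exact ⟨T, by positivity, hT⟩
end

section
/- Let ρ : [t₀,∞) → ℝ satisfy c₇·(log t)/t ≤ ρ(t) ≤ c₈·(log t)/t for positive constants c₇ ≤ c₈, be differentiable, and satisfy ρ'(t) = −π·ρ(t)²/log t + E(t) with |E(t)| ≤ C·(log t)^(1/2)/t² for all t ≥ t₀. Then ρ(t) = (log t)/(π·t)·(1 + O((log t)^(−1/2))) as t → ∞. -/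
private lemma mono_aux {a : ℝ} {f f' : ℝ → ℝ}
    (hf : ∀ t, a ≤ t → HasDerivAt f (f' t) t)
    (hf0 : ∀ t, a ≤ t → 0 ≤ f' t) : MonotoneOn f (Set.Ici a) := by
  apply monotoneOn_of_deriv_nonneg (convex_Ici a)
  · exact fun t ht => (hf t ht).continuousAt.continuousWithinAt
  · intro t ht
    rw [interior_Ici] at ht
    exact (hf t (le_of_lt ht)).differentiableAt.differentiableWithinAt
  · intro t ht
    rw [interior_Ici] at ht
    rw [(hf t (le_of_lt ht)).deriv]
    exact hf0 t (le_of_lt ht)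

private lemma log_rpow_le_self (t : ℝ) (ht : 256 ≤ t) :
    Real.log t ^ ((3 : ℝ) / 2) ≤ t := by
  have ht0 : (0 : ℝ) < t := by linarith
  have hlog1 : 1 ≤ Real.log t := by
    rw [← Real.log_exp 1]
    apply Real.log_le_log (Real.exp_pos 1)
    have := Real.exp_one_lt_d9
    linarith
  have hssnn : 0 < Real.sqrt (Real.sqrt t) := by
    apply Real.sqrt_pos.mpr
    exact Real.sqrt_pos.mpr ht0
  have hs : Real.log (Real.sqrt (Real.sqrt t)) = Real.log t / 4 := by
    rw [Real.log_sqrt (Real.sqrt_nonneg t), Real.log_sqrt ht0.le]; ring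
  have h4 : Real.log t ≤ 4 * Real.sqrt (Real.sqrt t) := by
    have h := Real.log_le_sub_one_of_pos hssnn
    rw [hs] at h
    linarith
  have h2 : Real.log t ^ (2 : ℕ) ≤ 16 * Real.sqrt t := by
    calc Real.log t ^ (2 : ℕ)
        ≤ (4 * Real.sqrt (Real.sqrt t)) ^ (2 : ℕ) := by
          apply pow_le_pow_left₀ (by linarith) h4
      _ = 16 * Real.sqrt t := by
          rw [mul_pow, Real.sq_sqrt (Real.sqrt_nonneg t)]; norm_num
  have h16 : (16 : ℝ) ≤ Real.sqrt t := by
    have : (16 : ℝ) = Real.sqrt 256 := by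
      rw [show (256 : ℝ) = 16 ^ 2 by norm_num, Real.sqrt_sq (by norm_num)]
    rw [this]
    exact Real.sqrt_le_sqrt ht
  have hsq : Real.sqrt t * Real.sqrt t = t := Real.mul_self_sqrt ht0.le
  have hfin : Real.log t ^ (2 : ℕ) ≤ t := by nlinarith [Real.sqrt_nonneg t]
  calc Real.log t ^ ((3 : ℝ) / 2)
      ≤ Real.log t ^ (((2 : ℕ) : ℝ)) :=
        Real.rpow_le_rpow_of_exponent_le hlog1 (by norm_num)
    _ = Real.log t ^ (2 : ℕ) := Real.rpow_natCast _ 2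
    _ ≤ t := hfin

/-- Calculus exercise deducing the Bramson–Griffeath density asymptotic
`ρ(t) = log t/(π t)·(1 + O((log t)^(-1/2)))` from the effective rate equation
`ρ'(t) = -π·ρ(t)²/log t + E(t)` with `|E(t)| ≤ C·(log t)^(1/2)/t²` and the crude
bounds `c₇·log t/t ≤ ρ(t) ≤ c₈·log t/t`. -/
theorem density_asymptotic_from_rate_equation
    (t₀ C c₇ c₈ : ℝ) (ht₀ : 3 ≤ t₀) (hC : 0 < C) (h₇ : 0 < c₇) (h₇₈ : c₇ ≤ c₈)
    (ρ E : ℝ → ℝ)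
    (hlb : ∀ t, t₀ ≤ t → c₇ * Real.log t / t ≤ ρ t)
    (hub : ∀ t, t₀ ≤ t → ρ t ≤ c₈ * Real.log t / t)
    (hE : ∀ t, t₀ ≤ t → |E t| ≤ C * Real.log t ^ ((1 : ℝ) / 2) / t ^ 2)
    (hode : ∀ t, t₀ ≤ t →
      HasDerivAt ρ (-(Real.pi * ρ t ^ 2 / Real.log t) + E t) t) :
    ∃ C' T : ℝ, 0 < C' ∧ ∀ t, T ≤ t →
      |ρ t - Real.log t / (Real.pi * t)| ≤
        C' * Real.log t ^ (-(1 : ℝ) / 2) * (Real.log t / (Real.pi * t)) := by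
  have hπ : (0 : ℝ) < Real.pi := Real.pi_pos
  set K : ℝ := Real.pi + C / c₇ ^ 2 with hKdef
  have hK : 0 < K := by positivity
  set T₀ : ℝ := max t₀ (Real.exp 9) with hT₀def
  have hT₀t₀ : t₀ ≤ T₀ := le_max_left _ _
  have hT₀pos : 0 < T₀ := lt_of_lt_of_le (Real.exp_pos 9) (le_max_right _ _)
  have hfacts : ∀ t, T₀ ≤ t → 0 < t ∧ 9 ≤ Real.log t ∧ 0 < ρ t := by
    intro t ht
    have ht0 : 0 < t := lt_of_lt_of_le hT₀pos ht
    have hlog : 9 ≤ Real.log t := by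
      rw [← Real.log_exp 9]
      exact Real.log_le_log (Real.exp_pos 9) (le_trans (le_max_right _ _) ht)
    refine ⟨ht0, hlog, ?_⟩
    have h1 := hlb t (le_trans hT₀t₀ ht)
    have h2 : 0 < c₇ * Real.log t / t := by positivity
    linarith
  set φ : ℝ → ℝ := fun s => (ρ s)⁻¹ - Real.pi * s / Real.log s with hφdef
  set g : ℝ → ℝ := fun s => 2 * K * (s * Real.log s ^ (-(3 : ℝ) / 2)) with hgdef
  -- derivative of φ
  have hφ' : ∀ t, T₀ ≤ t →
      HasDerivAt φ (Real.pi / Real.log t ^ 2 - E t / ρ t ^ 2) t := by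
    intro t ht
    obtain ⟨ht0, hlog, hρ0⟩ := hfacts t ht
    have hLne : Real.log t ≠ 0 := by intro h; rw [h] at hlog; norm_num at hlog
    have h1 : HasDerivAt (fun s => (ρ s)⁻¹)
        (-(-(Real.pi * ρ t ^ 2 / Real.log t) + E t) / ρ t ^ 2) t :=
      (hode t (le_trans hT₀t₀ ht)).inv (ne_of_gt hρ0)
    have ha : HasDerivAt (fun s : ℝ => Real.pi * s) (Real.pi * 1) t :=
      (hasDerivAt_id t).const_mul Real.pi
    have h2 : HasDerivAt (fun s => Real.pi * s / Real.log s)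
        ((Real.pi * 1 * Real.log t - Real.pi * t * t⁻¹) / Real.log t ^ 2) t :=
      ha.div (Real.hasDerivAt_log (ne_of_gt ht0)) hLne
    have h3 := h1.sub h2
    refine h3.congr_deriv ?_
    field_simp
    ring
  -- derivative of g
  have hg' : ∀ t, T₀ ≤ t → HasDerivAt g
      (2 * K * (1 * Real.log t ^ (-(3 : ℝ) / 2) +
        t * (t⁻¹ * (-(3 : ℝ) / 2) * Real.log t ^ (-(3 : ℝ) / 2 - 1)))) t := by
    intro t ht
    obtain ⟨ht0, hlog, -⟩ := hfacts t ht
    have hLne : Real.log t ≠ 0 := by intro h; rw [h] at hlog; norm_num at hlog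
    have hr : HasDerivAt (fun s => Real.log s ^ (-(3 : ℝ) / 2))
        (t⁻¹ * (-(3 : ℝ) / 2) * Real.log t ^ (-(3 : ℝ) / 2 - 1)) t :=
      (Real.hasDerivAt_log (ne_of_gt ht0)).rpow_const (Or.inl hLne)
    exact ((hasDerivAt_id t).mul hr).const_mul (2 * K)
  -- lower bound for g'
  have hg'lb : ∀ t, T₀ ≤ t →
      K * Real.log t ^ (-(3 : ℝ) / 2) ≤
      2 * K * (1 * Real.log t ^ (-(3 : ℝ) / 2) +
        t * (t⁻¹ * (-(3 : ℝ) / 2) * Real.log t ^ (-(3 : ℝ) / 2 - 1))) := by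
    intro t ht
    obtain ⟨ht0, hlog, -⟩ := hfacts t ht
    have hL : (0 : ℝ) < Real.log t := by linarith
    have htt : t * (t⁻¹ * (-(3 : ℝ) / 2) * Real.log t ^ (-(3 : ℝ) / 2 - 1)) =
        (-(3 : ℝ) / 2) * Real.log t ^ (-(3 : ℝ) / 2 - 1) := by
      field_simp
    rw [htt]
    have hsplit : Real.log t ^ (-(3 : ℝ) / 2) =
        Real.log t ^ (-(3 : ℝ) / 2 - 1) * Real.log t := by
      rw [← Real.rpow_add_one (ne_of_gt hL) (-(3 : ℝ) / 2 - 1)]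
      norm_num
    have hpow : 0 < Real.log t ^ (-(3 : ℝ) / 2 - 1) := Real.rpow_pos_of_pos hL _
    rw [hsplit]
    nlinarith [mul_pos hK hpow, mul_pos (mul_pos hK hpow) hL]
  -- bound for φ'
  have hφ'bd : ∀ t, T₀ ≤ t →
      |Real.pi / Real.log t ^ 2 - E t / ρ t ^ 2| ≤ K * Real.log t ^ (-(3 : ℝ) / 2) := by
    intro t ht
    obtain ⟨ht0, hlog, hρ0⟩ := hfacts t ht
    have hL : (0 : ℝ) < Real.log t := by linarith
    have htt₀ := le_trans hT₀t₀ ht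
    have h1 : Real.pi / Real.log t ^ 2 ≤ Real.pi * Real.log t ^ (-(3 : ℝ) / 2) := by
      rw [div_le_iff₀ (by positivity : (0 : ℝ) < Real.log t ^ 2)]
      have e2 : Real.log t ^ (-(3 : ℝ) / 2) * Real.log t ^ (((2 : ℕ) : ℝ)) =
          Real.log t ^ ((1 : ℝ) / 2) := by
        rw [← Real.rpow_add hL]; norm_num
      have e3 : (1 : ℝ) ≤ Real.log t ^ ((1 : ℝ) / 2) :=
        Real.one_le_rpow (by linarith) (by norm_num)
      calc Real.pi = Real.pi * 1 := (mul_one _).symm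
        _ ≤ Real.pi * (Real.log t ^ (-(3 : ℝ) / 2) * Real.log t ^ (((2 : ℕ) : ℝ))) := by
            rw [e2]; exact mul_le_mul_of_nonneg_left e3 hπ.le
        _ = Real.pi * Real.log t ^ (-(3 : ℝ) / 2) * Real.log t ^ 2 := by
            rw [Real.rpow_natCast]; ring
    have hρlb : c₇ * Real.log t / t ≤ ρ t := hlb t htt₀
    have hρlb0 : (0 : ℝ) < c₇ * Real.log t / t := by positivity
    have h2 : |E t| / ρ t ^ 2 ≤ (C / c₇ ^ 2) * Real.log t ^ (-(3 : ℝ) / 2) := by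
      have hq : |E t| / ρ t ^ 2 ≤
          (C * Real.log t ^ ((1 : ℝ) / 2) / t ^ 2) / (c₇ * Real.log t / t) ^ 2 :=
        div_le_div₀ (by positivity) (hE t htt₀) (by positivity)
          (pow_le_pow_left₀ hρlb0.le hρlb 2)
      refine hq.trans (le_of_eq ?_)
      rw [show Real.log t ^ ((1 : ℝ) / 2) =
          Real.log t ^ (-(3 : ℝ) / 2) * Real.log t ^ (((2 : ℕ) : ℝ)) by
        rw [← Real.rpow_add hL]; norm_num]
      rw [Real.rpow_natCast]
      field_simp
    have habs : |Real.pi / Real.log t ^ 2 - E t / ρ t ^ 2| ≤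
        Real.pi / Real.log t ^ 2 + |E t| / ρ t ^ 2 := by
      have := abs_sub (Real.pi / Real.log t ^ 2) (E t / ρ t ^ 2)
      have hnn : |Real.pi / Real.log t ^ 2| = Real.pi / Real.log t ^ 2 :=
        abs_of_nonneg (by positivity)
      have hE2 : |E t / ρ t ^ 2| = |E t| / ρ t ^ 2 := by
        rw [abs_div, abs_of_nonneg (by positivity : (0 : ℝ) ≤ ρ t ^ 2)]
      rw [hnn, hE2] at this
      exact this
    have : Real.pi / Real.log t ^ 2 + |E t| / ρ t ^ 2 ≤ K * Real.log t ^ (-(3 : ℝ) / 2) := by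
      rw [hKdef, add_mul]
      exact add_le_add h1 h2
    linarith
  -- monotonicity of g ∓ φ
  have hmono₁ : MonotoneOn (fun s => g s - φ s) (Set.Ici T₀) := by
    apply mono_aux (f' := fun t =>
      2 * K * (1 * Real.log t ^ (-(3 : ℝ) / 2) +
        t * (t⁻¹ * (-(3 : ℝ) / 2) * Real.log t ^ (-(3 : ℝ) / 2 - 1))) -
      (Real.pi / Real.log t ^ 2 - E t / ρ t ^ 2))
    · exact fun t ht => (hg' t ht).sub (hφ' t ht)
    · intro t ht
      have h1 := hg'lb t ht
      have h2 := (abs_le.mp (hφ'bd t ht)).2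
      linarith
  have hmono₂ : MonotoneOn (fun s => g s + φ s) (Set.Ici T₀) := by
    apply mono_aux (f' := fun t =>
      2 * K * (1 * Real.log t ^ (-(3 : ℝ) / 2) +
        t * (t⁻¹ * (-(3 : ℝ) / 2) * Real.log t ^ (-(3 : ℝ) / 2 - 1))) +
      (Real.pi / Real.log t ^ 2 - E t / ρ t ^ 2))
    · exact fun t ht => (hg' t ht).add (hφ' t ht)
    · intro t ht
      have h1 := hg'lb t ht
      have h2 := (abs_le.mp (hφ'bd t ht)).1
      linarith
  set B : ℝ := |φ T₀| with hBdef
  have hB0 : 0 ≤ B := abs_nonneg _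
  have hφbd : ∀ t, T₀ ≤ t → |φ t| ≤ B + g t := by
    intro t ht
    have h1 := hmono₁ Set.self_mem_Ici (Set.mem_Ici.mpr ht) ht
    have h2 := hmono₂ Set.self_mem_Ici (Set.mem_Ici.mpr ht) ht
    simp only at h1 h2
    have hg0 : 0 ≤ g T₀ := by
      obtain ⟨h0, hl, -⟩ := hfacts T₀ le_rfl
      have hln : (0 : ℝ) ≤ Real.log T₀ := by linarith
      have := Real.rpow_nonneg hln (-(3 : ℝ) / 2)
      rw [hgdef]
      positivity
    rw [abs_le]
    constructor
    · have := neg_abs_le (φ T₀)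
      rw [← hBdef] at *
      linarith
    · have := le_abs_self (φ T₀)
      rw [← hBdef] at *
      linarith
  refine ⟨c₈ * (B + 2 * K), max T₀ 256, mul_pos (lt_of_lt_of_le h₇ h₇₈) (by linarith), ?_⟩
  intro t ht
  have htT₀ : T₀ ≤ t := le_trans (le_max_left _ _) ht
  have ht256 : (256 : ℝ) ≤ t := le_trans (le_max_right _ _) ht
  obtain ⟨ht0, hlog, hρ0⟩ := hfacts t htT₀
  have hL : (0 : ℝ) < Real.log t := by linarith
  have hLne : Real.log t ≠ 0 := ne_of_gt hL
  have hid : ρ t - Real.log t / (Real.pi * t) =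
      -(ρ t * (Real.log t / (Real.pi * t)) * φ t) := by
    rw [hφdef]
    field_simp
    ring
  rw [hid, abs_neg, abs_mul, abs_mul, abs_of_pos hρ0,
    abs_of_pos (div_pos hL (by positivity : (0 : ℝ) < Real.pi * t))]
  have key : ρ t * |φ t| ≤ c₈ * (B + 2 * K) * Real.log t ^ (-(1 : ℝ) / 2) := by
    have hρub := hub t (le_trans hT₀t₀ htT₀)
    have step1 : ρ t * |φ t| ≤ c₈ * Real.log t / t * (B + g t) :=
      mul_le_mul hρub (hφbd t htT₀) (abs_nonneg _)
        (le_of_lt (div_pos (mul_pos (lt_of_lt_of_le h₇ h₇₈) hL) ht0))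
    refine step1.trans ?_
    have e5 : Real.log t * Real.log t ^ (-(3 : ℝ) / 2) = Real.log t ^ (-(1 : ℝ) / 2) := by
      rw [show (-(1 : ℝ) / 2) = 1 + (-(3 : ℝ) / 2) by ring, Real.rpow_add hL,
        Real.rpow_one]
    have e6 : Real.log t / t ≤ Real.log t ^ (-(1 : ℝ) / 2) := by
      have h32 := log_rpow_le_self t ht256
      have e7 : Real.log t = Real.log t ^ (-(1 : ℝ) / 2) * Real.log t ^ ((3 : ℝ) / 2) := by
        rw [← Real.rpow_add hL]; norm_num
      rw [div_le_iff₀ ht0]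
      calc Real.log t
          = Real.log t ^ (-(1 : ℝ) / 2) * Real.log t ^ ((3 : ℝ) / 2) := e7
        _ ≤ Real.log t ^ (-(1 : ℝ) / 2) * t :=
            mul_le_mul_of_nonneg_left h32 (Real.rpow_nonneg hL.le _)
    calc c₈ * Real.log t / t * (B + g t)
        = c₈ * B * (Real.log t / t) +
          2 * K * c₈ * (Real.log t * Real.log t ^ (-(3 : ℝ) / 2)) := by
          rw [hgdef]
          field_simp
      _ ≤ c₈ * B * Real.log t ^ (-(1 : ℝ) / 2) +
          2 * K * c₈ * Real.log t ^ (-(1 : ℝ) / 2) := by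
          rw [e5]
          have : c₈ * B * (Real.log t / t) ≤ c₈ * B * Real.log t ^ (-(1 : ℝ) / 2) :=
            mul_le_mul_of_nonneg_left e6 (mul_nonneg (by linarith) hB0)
          linarith
      _ = c₈ * (B + 2 * K) * Real.log t ^ (-(1 : ℝ) / 2) := by ring
  calc ρ t * (Real.log t / (Real.pi * t)) * |φ t|
      = ρ t * |φ t| * (Real.log t / (Real.pi * t)) := by ring
    _ ≤ c₈ * (B + 2 * K) * Real.log t ^ (-(1 : ℝ) / 2) * (Real.log t / (Real.pi * t)) :=
        mul_le_mul_of_nonneg_right key (by positivity)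
end
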